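/- Let d = (d_1, ..., d_n) be a non-increasing sequence of positive integers whose sum is even and at most 2n - 2. If n_1(d) ≥ Σ_{i=1}^{n_{≥2}(d)} d_i, then the minimum domination number over all forest realizations of d equals n_{≥2}(d) + (n_1(d) - Σ_{i=1}^{n_{≥2}(d)} d_i)/2. -/

import Mathlib

open Finset

/-- The degree of a vertex in a simple graph. -/
noncomputable def deg {V : Type*} (G : SimpleGraph V) (v : V) : ℕ := Nat.card {u // G.Adj v u}

/-- `D` is a dominating set of `G`. -/
def DomSet {V : Type*} (G : SimpleGraph V) (D : Set V) : Prop := ∀ v ∉ D, ∃ u ∈ D, G.Adj u v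

/-- `S` is an independent set of `G`. -/
def IndepSet {V : Type*} (G : SimpleGraph V) (S : Set V) : Prop :=
  ∀ u ∈ S, ∀ v ∈ S, ¬ G.Adj u v

/-- The domination number of `G`. -/
noncomputable def domNum {V : Type*} [Fintype V] (G : SimpleGraph V) : ℕ :=
  sInf {k | ∃ D : Finset V, D.card = k ∧ DomSet G ↑D}

/-- The independence number of `G`. -/
noncomputable def indepNum {V : Type*} [Fintype V] (G : SimpleGraph V) : ℕ :=
  sSup {k | ∃ S : Finset V, S.card = k ∧ IndepSet G ↑S}

/-- Sum of the first `k` entries `d_1 + ... + d_k` (0-indexed: indices `< k`). -/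
def psum {n : ℕ} (d : Fin n → ℕ) (k : ℕ) : ℕ := ∑ i : Fin n, if (i : ℕ) < k then d i else 0

/-- Sum of the remaining entries `d_{k+1} + ... + d_n` (0-indexed: indices `≥ k`). -/
def ssum {n : ℕ} (d : Fin n → ℕ) (k : ℕ) : ℕ := ∑ i : Fin n, if k ≤ (i : ℕ) then d i else 0

/-- Slater's bound `sl(d) = min{k ∈ [n] : d_1 + ... + d_k ≥ n - k}`. -/
noncomputable def slater (n : ℕ) (d : Fin n → ℕ) : ℕ := sInf {k | 1 ≤ k ∧ k ≤ n ∧ n - k ≤ psum d k}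

/-- The annihilation number `a(d) = n - min{k ∈ [n] : Σ_{i≤k} d_i ≥ Σ_{i>k} d_i}`. -/
noncomputable def annih (n : ℕ) (d : Fin n → ℕ) : ℕ := n - sInf {k | 1 ≤ k ∧ k ≤ n ∧ ssum d k ≤ psum d k}

/-- The number of entries of `d` equal to `j`. -/
def nCount {n : ℕ} (d : Fin n → ℕ) (j : ℕ) : ℕ := (Finset.univ.filter fun i => d i = j).card

/-- The number of entries of `d` that are at least `2`. -/
def nGe2 {n : ℕ} (d : Fin n → ℕ) : ℕ := (Finset.univ.filter fun i => 2 ≤ d i).card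

/-- `F` is a forest realization of the degree sequence `d`. -/
def IsForestReal {n : ℕ} (d : Fin n → ℕ) (F : SimpleGraph (Fin n)) : Prop :=
  F.IsAcyclic ∧ ∀ i, deg F i = d i

/-- The minimum domination number over all forest realizations of `d`. -/
noncomputable def gammaFmin {n : ℕ} (d : Fin n → ℕ) : ℕ :=
  sInf {m | ∃ F : SimpleGraph (Fin n), IsForestReal d F ∧ domNum F = m}

/-- The maximum independence number over all forest realizations of `d`. -/
noncomputable def alphaFmax {n : ℕ} (d : Fin n → ℕ) : ℕ :=
  sSup {m | ∃ F : SimpleGraph (Fin n), IsForestReal d F ∧ indepNum F = m}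

lemma deg_eq_ncard {V : Type*} (G : SimpleGraph V) (v : V) :
    deg G v = {u | G.Adj v u}.ncard := by
  rw [deg, ← Nat.card_coe_set_eq]
  rfl

lemma deg_eq_degree {V : Type*} [Fintype V] (G : SimpleGraph V) [DecidableRel G.Adj] (v : V) :
    deg G v = G.degree v := by
  rw [deg_eq_ncard, SimpleGraph.degree, SimpleGraph.neighborFinset_eq_filter,
    ← Set.ncard_coe_finset]
  congr 1
  ext u
  simp

/-- Lower bound: any dominating set has at least `n - #edges` elements. -/
lemma dom_card_lower {n : ℕ} (G : SimpleGraph (Fin n)) (D : Finset (Fin n))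
    (hD : DomSet G ↑D) : n ≤ D.card + (∑ i, deg G i) / 2 := by
  classical
  have hdeg : ∑ i, deg G i = 2 * G.edgeFinset.card := by
    rw [show (∑ i, deg G i) = ∑ i, G.degree i from by
      refine Finset.sum_congr rfl fun i _ => deg_eq_degree G i]
    exact SimpleGraph.sum_degrees_eq_twice_card_edges G
  have key : Dᶜ.card ≤ G.edgeFinset.card := by
    set f : Fin n → Sym2 (Fin n) := fun v =>
      if h : v ∈ (↑D : Set (Fin n)) then s(v, v) else s(Classical.choose (hD v h), v) with hf
    apply Finset.card_le_card_of_injOn f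
    · intro v hv
      rw [Finset.mem_coe, Finset.mem_compl] at hv
      have hv' : v ∉ (↑D : Set (Fin n)) := by simpa using hv
      obtain ⟨hu, hadj⟩ := Classical.choose_spec (hD v hv')
      simp only [hf, dif_neg hv', Finset.mem_coe, dif_neg hv, SimpleGraph.mem_edgeFinset, SimpleGraph.mem_edgeSet]
      exact hadj
    · intro v hv v' hv' hvv'
      rw [Finset.coe_compl, Set.mem_compl_iff] at hv hv'
      obtain ⟨hu, hadj⟩ := Classical.choose_spec (hD v hv)
      obtain ⟨hu', hadj'⟩ := Classical.choose_spec (hD v' hv')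
      simp only [hf, dif_neg hv, dif_neg hv', Sym2.eq, Sym2.rel_iff', Prod.mk.injEq,
        Prod.swap_prod_mk] at hvv'
      rcases hvv' with ⟨_, h2⟩ | ⟨h1, h2⟩
      · exact h2
      · exact absurd (h2 ▸ hu') hv
  have hc : Dᶜ.card = n - D.card := by
    rw [Finset.card_compl, Fintype.card_fin]
  omega

lemma cycle_two_neighbors {V : Type*} {G : SimpleGraph V} {u : V} {c : G.Walk u u}
    (hc : c.IsCycle) : ∃ a b, G.Adj u a ∧ G.Adj u b ∧ a ≠ b := by
  cases c with
  | nil => exact absurd rfl hc.ne_nil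
  | @cons _ x _ h p =>
    have h3 := hc.three_le_length
    simp only [SimpleGraph.Walk.length_cons] at h3
    have hpn : ¬ p.reverse.Nil := by
      rw [SimpleGraph.Walk.not_nil_iff_lt_length]
      simp only [SimpleGraph.Walk.length_reverse]
      omega
    refine ⟨x, p.reverse.getVert 1, h, p.reverse.adj_snd hpn, ?_⟩
    intro hab
    have hnd := hc.edges_nodup
    rw [SimpleGraph.Walk.edges_cons, List.nodup_cons] at hnd
    apply hnd.1
    have hfst : ∀ {y : V} (q : G.Walk u y), ¬ q.Nil → s(u, q.getVert 1) ∈ q.edges := by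
      intro y q hq
      cases q with
      | nil => simp at hq
      | cons h' q' =>
        rw [SimpleGraph.Walk.edges_cons]
        have : (SimpleGraph.Walk.cons h' q').getVert 1 = q'.getVert 0 := rfl
        rw [this, SimpleGraph.Walk.getVert_zero]
        exact List.mem_cons_self
    have hmem := hfst p.reverse hpn
    rw [SimpleGraph.Walk.edges_reverse, List.mem_reverse] at hmem
    rw [← hab] at hmem
    exact hmem

lemma isAcyclic_of_leaf_edges {V : Type*} {G : SimpleGraph V}
    (h : ∀ u v, G.Adj u v → (∀ x y, G.Adj u x → G.Adj u y → x = y) ∨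
      (∀ x y, G.Adj v x → G.Adj v y → x = y)) : G.IsAcyclic := by
  classical
  intro v c hc
  cases c with
  | nil => exact absurd rfl hc.ne_nil
  | @cons _ x _ hadj p =>
    have hx : x ∈ (SimpleGraph.Walk.cons hadj p).support := by
      rw [SimpleGraph.Walk.support_cons]
      exact List.mem_cons_of_mem _ p.start_mem_support
    have hv : v ∈ (SimpleGraph.Walk.cons hadj p).support :=
      (SimpleGraph.Walk.cons hadj p).start_mem_support
    rcases h v x hadj with hu | hu
    · obtain ⟨a, b, ha, hb, hab⟩ := cycle_two_neighbors (hc.rotate hv)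
      exact hab (hu a b ha hb)
    · obtain ⟨a, b, ha, hb, hab⟩ := cycle_two_neighbors (hc.rotate hx)
      exact hab (hu a b ha hb)

/-! ### arithmetic about psum / nGe2 -/

lemma psum_mono {n : ℕ} (d : Fin n → ℕ) : Monotone (psum d) := by
  intro a b hab
  apply Finset.sum_le_sum
  intro i _
  split_ifs <;> omega

lemma psum_zero {n : ℕ} (d : Fin n → ℕ) : psum d 0 = 0 := by
  simp [psum]

lemma psum_succ {n : ℕ} (d : Fin n → ℕ) (j : Fin n) :
    psum d ((j : ℕ) + 1) = psum d (j : ℕ) + d j := by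
  unfold psum
  rw [show (∑ i : Fin n, if (i:ℕ) < (j:ℕ) + 1 then d i else 0)
      = ∑ i : Fin n, ((if (i:ℕ) < (j:ℕ) then d i else 0) + (if i = j then d i else 0)) from ?_]
  · rw [Finset.sum_add_distrib]
    congr 1
    simp
  · apply Finset.sum_congr rfl
    intro i _
    by_cases h : i = j
    · subst h; simp
    · have hne : (i:ℕ) ≠ (j:ℕ) := fun hc => h (Fin.val_injective hc)
      rw [if_neg h]
      split_ifs <;> omega

lemma card_val_Ico {n a b : ℕ} (hb : b ≤ n) :
    ((univ : Finset (Fin n)).filter fun v : Fin n => a ≤ (v:ℕ) ∧ (v:ℕ) < b).card = b - a := by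
  have hmap : ((univ : Finset (Fin n)).filter fun v : Fin n => a ≤ (v:ℕ) ∧ (v:ℕ) < b).map
      Fin.valEmbedding = Finset.Ico a b := by
    ext x
    simp only [Finset.mem_map, Finset.mem_filter, Finset.mem_univ, true_and,
      Fin.valEmbedding_apply, Finset.mem_Ico]
    constructor
    · rintro ⟨v, hv, rfl⟩; exact hv
    · rintro ⟨h1, h2⟩; exact ⟨⟨x, by omega⟩, ⟨h1, h2⟩, rfl⟩
  rw [← Finset.card_map Fin.valEmbedding, hmap, Nat.card_Ico]

lemma card_val_lt {n b : ℕ} (hb : b ≤ n) :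
    ((univ : Finset (Fin n)).filter fun v : Fin n => (v:ℕ) < b).card = b := by
  have := card_val_Ico (n := n) (a := 0) hb
  rw [show ((univ : Finset (Fin n)).filter fun v : Fin n => 0 ≤ (v:ℕ) ∧ (v:ℕ) < b)
      = ((univ : Finset (Fin n)).filter fun v : Fin n => (v:ℕ) < b) from by
    apply Finset.filter_congr; intro x _; simp] at this
  omega

section DCtx

variable {n : ℕ} {d : Fin n → ℕ}

lemma nGe2_le (d : Fin n → ℕ) : nGe2 d ≤ n := by
  have := Finset.card_filter_le (univ : Finset (Fin n)) (fun i => 2 ≤ d i)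
  simpa [nGe2] using this

lemma lt_nGe2_iff (hd : Antitone d) (i : Fin n) : (i:ℕ) < nGe2 d ↔ 2 ≤ d i := by
  constructor
  · intro hi
    by_contra h2
    have hsub : (univ.filter fun j : Fin n => 2 ≤ d j) ⊆
        (univ.filter fun j : Fin n => (j:ℕ) < (i:ℕ)) := by
      intro j hj
      simp only [Finset.mem_filter, Finset.mem_univ, true_and] at hj ⊢
      by_contra hji
      have : i ≤ j := by rw [Fin.le_def]; omega
      have := hd this
      omega
    have hcard := Finset.card_le_card hsub
    rw [card_val_lt (le_of_lt i.isLt)] at hcard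
    rw [nGe2] at hi
    omega
  · intro h2
    have hsub : (univ.filter fun j : Fin n => (j:ℕ) < (i:ℕ) + 1) ⊆
        (univ.filter fun j : Fin n => 2 ≤ d j) := by
      intro j hj
      simp only [Finset.mem_filter, Finset.mem_univ, true_and] at hj ⊢
      have : j ≤ i := by rw [Fin.le_def]; omega
      have := hd this
      omega
    have hcard := Finset.card_le_card hsub
    rw [card_val_lt i.isLt] at hcard
    rw [nGe2]
    omega

lemma d_one (hd : Antitone d) (hpos : ∀ i, 1 ≤ d i) (i : Fin n) (hi : nGe2 d ≤ (i:ℕ)) :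
    d i = 1 := by
  have := (lt_nGe2_iff hd i)
  have := hpos i
  omega

lemma card_lt_nGe2 (hd : Antitone d) :
    ((univ : Finset (Fin n)).filter fun i : Fin n => (i:ℕ) < nGe2 d).card = nGe2 d :=
  card_val_lt (nGe2_le d)

lemma nGe2_add_nCount (hd : Antitone d) (hpos : ∀ i, 1 ≤ d i) :
    nGe2 d + nCount d 1 = n := by
  have h1 : nCount d 1 = ((univ : Finset (Fin n)).filter fun i : Fin n => ¬ (i:ℕ) < nGe2 d).card := by
    rw [nCount]
    congr 1
    apply Finset.filter_congr
    intro i _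
    have h2 := lt_nGe2_iff hd i
    have h3 := hpos i
    constructor <;> (intro h; omega)
  have hsplit := Finset.card_filter_add_card_filter_not
    (s := (univ : Finset (Fin n))) (p := fun i : Fin n => (i:ℕ) < nGe2 d)
  rw [Finset.card_univ, Fintype.card_fin] at hsplit
  have h2 := card_lt_nGe2 (d := d) hd
  omega

lemma two_nGe2_le_psum (hd : Antitone d) : 2 * nGe2 d ≤ psum d (nGe2 d) := by
  calc 2 * nGe2 d
      = ∑ _i ∈ (univ : Finset (Fin n)).filter (fun i : Fin n => (i:ℕ) < nGe2 d), 2 := by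
        rw [Finset.sum_const, card_lt_nGe2 hd, smul_eq_mul]; ring
    _ ≤ ∑ i ∈ (univ : Finset (Fin n)).filter (fun i : Fin n => (i:ℕ) < nGe2 d), d i := by
        apply Finset.sum_le_sum
        intro i hi
        simp only [Finset.mem_filter, Finset.mem_univ, true_and] at hi
        exact (lt_nGe2_iff hd i).mp hi
    _ = psum d (nGe2 d) := by
        rw [psum, Finset.sum_filter]

lemma sum_eq_psum_add_nCount (hd : Antitone d) (hpos : ∀ i, 1 ≤ d i) :
    ∑ i, d i = psum d (nGe2 d) + nCount d 1 := by
  have key : ∀ i : Fin n, d i = (if (i:ℕ) < nGe2 d then d i else 0)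
      + (if ¬ (i:ℕ) < nGe2 d then 1 else 0) := by
    intro i
    by_cases h : (i:ℕ) < nGe2 d
    · simp [h]
    · simp only [if_neg h, if_pos h]
      have := d_one hd hpos i (by omega)
      omega
  calc ∑ i, d i = ∑ i : Fin n, ((if (i:ℕ) < nGe2 d then d i else 0)
      + (if ¬ (i:ℕ) < nGe2 d then 1 else 0)) := Finset.sum_congr rfl (fun i _ => key i)
    _ = psum d (nGe2 d) + nCount d 1 := by
        rw [Finset.sum_add_distrib]
        congr 1
        rw [Finset.sum_boole, Nat.cast_id, nCount]
        congr 1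
        apply Finset.filter_congr
        intro i _
        have h2 := lt_nGe2_iff hd i
        have h3 := hpos i
        constructor <;> (intro h; omega)

end DCtx

/-! ### the construction -/

noncomputable def ctr {n : ℕ} (d : Fin n → ℕ) (t : ℕ) : ℕ := sInf {i | t < psum d (i + 1)}

section Ctr

variable {n : ℕ} {d : Fin n → ℕ}

lemma ctr_char {t : ℕ} (ht : t < psum d (nGe2 d)) :
    psum d (ctr d t) ≤ t ∧ t < psum d (ctr d t + 1) ∧ ctr d t < nGe2 d := by
  have hk : 1 ≤ nGe2 d := by
    by_contra h
    have h0 : nGe2 d = 0 := by omega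
    rw [h0, psum_zero] at ht
    omega
  have hne : (nGe2 d - 1) ∈ {i | t < psum d (i + 1)} := by
    simp only [Set.mem_setOf_eq]
    rw [Nat.sub_add_cancel hk]
    exact ht
  have hmem : t < psum d (ctr d t + 1) := Nat.sInf_mem (Set.nonempty_of_mem hne)
  have hle : ctr d t ≤ nGe2 d - 1 := Nat.sInf_le hne
  refine ⟨?_, hmem, by omega⟩
  rcases Nat.eq_zero_or_pos (ctr d t) with h0 | h0
  · rw [h0, psum_zero]
    omega
  · have hnm := Nat.notMem_of_lt_sInf (show ctr d t - 1 < sInf {i | t < psum d (i + 1)} from by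
      unfold ctr at h0 ⊢
      omega)
    simp only [Set.mem_setOf_eq] at hnm
    rw [Nat.sub_add_cancel h0] at hnm
    omega

lemma ctr_eq_iff {t : ℕ} (ht : t < psum d (nGe2 d)) (i : ℕ) :
    ctr d t = i ↔ (psum d i ≤ t ∧ t < psum d (i + 1)) := by
  obtain ⟨h1, h2, h3⟩ := ctr_char (d := d) ht
  constructor
  · rintro rfl
    exact ⟨h1, h2⟩
  · rintro ⟨hi1, hi2⟩
    by_contra hne
    rcases lt_or_gt_of_ne hne with h | h
    · have := psum_mono d (show ctr d t + 1 ≤ i by omega)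
      omega
    · have := psum_mono d (show i + 1 ≤ ctr d t by omega)
      omega

end Ctr

noncomputable def Qf {n : ℕ} (d : Fin n → ℕ) (j : ℕ) : ℕ :=
  if j < nGe2 d then j
  else if j < nGe2 d + psum d (nGe2 d) then ctr d (j - nGe2 d)
  else if (j - (nGe2 d + psum d (nGe2 d))) % 2 = 0 then j + 1 else j - 1

noncomputable def Gd {n : ℕ} (d : Fin n → ℕ) : SimpleGraph (Fin n) where
  Adj u v := u ≠ v ∧ (Qf d u = (v : ℕ) ∨ Qf d v = (u : ℕ))
  symm := ⟨fun u v ⟨h1, h2⟩ => ⟨h1.symm, h2.symm⟩⟩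
  loopless := ⟨fun u ⟨h1, _⟩ => h1 rfl⟩

section Gd

variable {n : ℕ} {d : Fin n → ℕ}

lemma gd_adj (u v : Fin n) :
    (Gd d).Adj u v ↔ u ≠ v ∧ (Qf d u = (v : ℕ) ∨ Qf d v = (u : ℕ)) := Iff.rfl

lemma Qf_lt {j : ℕ} (hj : j < nGe2 d) : Qf d j = j := if_pos hj

lemma Qf_star {j : ℕ} (h1 : nGe2 d ≤ j) (h2 : j < nGe2 d + psum d (nGe2 d)) :
    Qf d j = ctr d (j - nGe2 d) := by
  unfold Qf
  rw [if_neg (by omega), if_pos h2]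

lemma Qf_star_lt {j : ℕ} (h1 : nGe2 d ≤ j) (h2 : j < nGe2 d + psum d (nGe2 d)) :
    Qf d j < nGe2 d := by
  rw [Qf_star h1 h2]
  exact (ctr_char (by omega)).2.2

lemma Qf_match {j : ℕ} (hks : nGe2 d + psum d (nGe2 d) ≤ j) (hj : j < n)
    (hpar : (n - (nGe2 d + psum d (nGe2 d))) % 2 = 0) :
    nGe2 d + psum d (nGe2 d) ≤ Qf d j ∧ Qf d j < n ∧ Qf d j ≠ j ∧ Qf d (Qf d j) = j ∧
      (Qf d j - (nGe2 d + psum d (nGe2 d))) % 2 ≠ (j - (nGe2 d + psum d (nGe2 d))) % 2 := by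
  set K := nGe2 d + psum d (nGe2 d) with hK
  by_cases he : (j - K) % 2 = 0
  · have hq : Qf d j = j + 1 := by
      unfold Qf
      rw [if_neg (by omega), if_neg (by omega), if_pos he]
    have hj1 : j + 1 < n := by omega
    have hq2 : Qf d (j + 1) = j := by
      unfold Qf
      rw [if_neg (by omega), if_neg (by omega), if_neg (by omega)]
      omega
    rw [hq]
    exact ⟨by omega, hj1, by omega, hq2, by omega⟩
  · have hq : Qf d j = j - 1 := by
      unfold Qf
      rw [if_neg (by omega), if_neg (by omega), if_neg he]
    have hq2 : Qf d (j - 1) = j := by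
      unfold Qf
      rw [if_neg (by omega), if_neg (by omega), if_pos (by omega)]
      omega
    rw [hq]
    exact ⟨by omega, by omega, by omega, hq2, by omega⟩

variable (hA : 2 * nGe2 d ≤ psum d (nGe2 d))
  (hB : nGe2 d + psum d (nGe2 d) ≤ n)
  (hC : (n - (nGe2 d + psum d (nGe2 d))) % 2 = 0)

include hA hB hC in
lemma adj_center {j v : Fin n} (hj : (j : ℕ) < nGe2 d) :
    (Gd d).Adj j v ↔
      (nGe2 d + psum d (j : ℕ) ≤ (v : ℕ) ∧ (v : ℕ) < nGe2 d + psum d ((j : ℕ) + 1)) := by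
  constructor
  · rintro ⟨hne, hor⟩
    have hQv : Qf d (v : ℕ) = (j : ℕ) := by
      rcases hor with h | h
      · rw [Qf_lt hj] at h
        exact absurd (Fin.val_injective h) hne
      · exact h
    by_cases hv1 : (v : ℕ) < nGe2 d
    · rw [Qf_lt hv1] at hQv
      exact absurd (Fin.val_injective hQv).symm hne
    by_cases hv2 : (v : ℕ) < nGe2 d + psum d (nGe2 d)
    · rw [Qf_star (by omega) hv2] at hQv
      have := (ctr_eq_iff (t := (v : ℕ) - nGe2 d) (by omega) (j : ℕ)).mp hQv
      omega
    · obtain ⟨hm1, -, -, -, -⟩ := Qf_match (d := d) (by omega) v.isLt hC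
      omega
  · rintro ⟨hv1, hv2⟩
    have hvk : nGe2 d ≤ (v : ℕ) := by omega
    have hvs : (v : ℕ) < nGe2 d + psum d (nGe2 d) := by
      have := psum_mono d (show (j : ℕ) + 1 ≤ nGe2 d by omega)
      omega
    have hQv : Qf d (v : ℕ) = (j : ℕ) := by
      rw [Qf_star hvk hvs, ctr_eq_iff (by omega)]
      omega
    exact ⟨Fin.ne_of_val_ne (by omega), Or.inr hQv⟩

include hA hB hC in
lemma adj_star {j v : Fin n} (hj1 : nGe2 d ≤ (j : ℕ))
    (hj2 : (j : ℕ) < nGe2 d + psum d (nGe2 d)) :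
    (Gd d).Adj j v ↔ (v : ℕ) = ctr d ((j : ℕ) - nGe2 d) := by
  constructor
  · rintro ⟨hne, hor⟩
    rcases hor with h | h
    · rw [Qf_star hj1 hj2] at h
      omega
    · exfalso
      by_cases hv1 : (v : ℕ) < nGe2 d
      · rw [Qf_lt hv1] at h
        omega
      by_cases hv2 : (v : ℕ) < nGe2 d + psum d (nGe2 d)
      · have := Qf_star_lt (d := d) (by omega) hv2
        omega
      · obtain ⟨hm1, -, -, -, -⟩ := Qf_match (d := d) (by omega) v.isLt hC
        omega
  · intro hv
    have hlt := Qf_star_lt (d := d) hj1 hj2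
    refine ⟨Fin.ne_of_val_ne (by rw [Qf_star hj1 hj2] at hlt; omega), Or.inl ?_⟩
    rw [Qf_star hj1 hj2, hv]

include hA hB hC in
lemma adj_match {j v : Fin n} (hj : nGe2 d + psum d (nGe2 d) ≤ (j : ℕ)) :
    (Gd d).Adj j v ↔ (v : ℕ) = Qf d (j : ℕ) := by
  obtain ⟨hm1, hm2, hm3, hm4, hm5⟩ := Qf_match (d := d) hj j.isLt hC
  constructor
  · rintro ⟨hne, hor⟩
    rcases hor with h | h
    · omega
    · by_cases hv1 : (v : ℕ) < nGe2 d
      · rw [Qf_lt hv1] at h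
        omega
      by_cases hv2 : (v : ℕ) < nGe2 d + psum d (nGe2 d)
      · have := Qf_star_lt (d := d) (by omega) hv2
        omega
      · obtain ⟨-, -, -, hvv, -⟩ := Qf_match (d := d) (by omega) v.isLt hC
        rw [h] at hvv
        exact hvv.symm
  · intro hv
    exact ⟨Fin.ne_of_val_ne (by omega), Or.inl hv.symm⟩

end Gd

section Gd2

variable {n : ℕ} {d : Fin n → ℕ}
  (hA : 2 * nGe2 d ≤ psum d (nGe2 d))
  (hB : nGe2 d + psum d (nGe2 d) ≤ n)
  (hC : (n - (nGe2 d + psum d (nGe2 d))) % 2 = 0)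

include hA hB hC in
lemma deg_Gd (hd : Antitone d) (hpos : ∀ i, 1 ≤ d i) (j : Fin n) : deg (Gd d) j = d j := by
  rw [deg_eq_ncard]
  by_cases hj1 : (j : ℕ) < nGe2 d
  · have hble : nGe2 d + psum d ((j : ℕ) + 1) ≤ n := by
      have := psum_mono d (show (j : ℕ) + 1 ≤ nGe2 d by omega)
      omega
    have hset : {u : Fin n | (Gd d).Adj j u} =
        ↑((univ : Finset (Fin n)).filter fun v : Fin n =>
          nGe2 d + psum d (j : ℕ) ≤ (v : ℕ) ∧ (v : ℕ) < nGe2 d + psum d ((j : ℕ) + 1)) := by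
      ext v
      simp only [Set.mem_setOf_eq, Finset.coe_filter, Finset.mem_univ, true_and]
      exact adj_center hA hB hC hj1
    rw [hset, Set.ncard_coe_finset, card_val_Ico hble]
    have := psum_succ d j
    omega
  · rw [show d j = 1 from d_one hd hpos j (by omega)]
    by_cases hj2 : (j : ℕ) < nGe2 d + psum d (nGe2 d)
    · have hctr := ctr_char (d := d) (t := (j : ℕ) - nGe2 d) (by omega)
      have hkn := nGe2_le d
      have hset : {u : Fin n | (Gd d).Adj j u}
          = {(⟨ctr d ((j : ℕ) - nGe2 d), by omega⟩ : Fin n)} := by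
        ext v
        simp only [Set.mem_setOf_eq, Set.mem_singleton_iff]
        rw [adj_star hA hB hC (by omega) hj2]
        constructor
        · intro h
          exact Fin.val_injective h
        · rintro rfl
          rfl
      rw [hset, Set.ncard_singleton]
    · obtain ⟨hm1, hm2, hm3, hm4, hm5⟩ := Qf_match (d := d) (by omega) j.isLt hC
      have hset : {u : Fin n | (Gd d).Adj j u} = {(⟨Qf d (j : ℕ), hm2⟩ : Fin n)} := by
        ext v
        simp only [Set.mem_setOf_eq, Set.mem_singleton_iff]
        rw [adj_match hA hB hC (by omega)]
        constructor
        · intro h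
          exact Fin.val_injective h
        · rintro rfl
          rfl
      rw [hset, Set.ncard_singleton]

include hA hB hC in
lemma gd_acyclic : (Gd d).IsAcyclic := by
  apply isAcyclic_of_leaf_edges
  have key : ∀ w : Fin n, nGe2 d ≤ (w : ℕ) →
      ∀ x y, (Gd d).Adj w x → (Gd d).Adj w y → x = y := by
    intro w hw x y hx hy
    by_cases hws : (w : ℕ) < nGe2 d + psum d (nGe2 d)
    · rw [adj_star hA hB hC hw hws] at hx hy
      exact Fin.val_injective (hx.trans hy.symm)
    · rw [adj_match hA hB hC (by omega)] at hx hy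
      exact Fin.val_injective (hx.trans hy.symm)
  intro u v huv
  by_cases hu : nGe2 d ≤ (u : ℕ)
  · exact Or.inl (key u hu)
  by_cases hv : nGe2 d ≤ (v : ℕ)
  · exact Or.inr (key v hv)
  exfalso
  obtain ⟨hne, hor⟩ := huv
  rcases hor with h | h
  · rw [Qf_lt (by omega)] at h
    exact hne (Fin.val_injective h)
  · rw [Qf_lt (by omega)] at h
    exact hne (Fin.val_injective h).symm

include hB hC in
lemma Dset_card :
    ((univ : Finset (Fin n)).filter fun v : Fin n => (v : ℕ) < nGe2 d ∨
      (nGe2 d + psum d (nGe2 d) ≤ (v : ℕ) ∧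
        ((v : ℕ) - (nGe2 d + psum d (nGe2 d))) % 2 = 0)).card
    = nGe2 d + (n - (nGe2 d + psum d (nGe2 d))) / 2 := by
  have hmap : ((univ : Finset (Fin n)).filter fun v : Fin n => (v : ℕ) < nGe2 d ∨
      (nGe2 d + psum d (nGe2 d) ≤ (v : ℕ) ∧
        ((v : ℕ) - (nGe2 d + psum d (nGe2 d))) % 2 = 0)).map Fin.valEmbedding
      = (Finset.range n).filter fun x : ℕ => x < nGe2 d ∨
        (nGe2 d + psum d (nGe2 d) ≤ x ∧ (x - (nGe2 d + psum d (nGe2 d))) % 2 = 0) := by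
    ext x
    simp only [Finset.mem_map, Finset.mem_filter, Finset.mem_univ, true_and,
      Fin.valEmbedding_apply, Finset.mem_range]
    constructor
    · rintro ⟨v, hv, rfl⟩
      exact ⟨v.isLt, hv⟩
    · rintro ⟨h1, h2⟩
      exact ⟨⟨x, h1⟩, h2, rfl⟩
  rw [← Finset.card_map Fin.valEmbedding, hmap,
    ← Finset.card_range (nGe2 d + (n - (nGe2 d + psum d (nGe2 d))) / 2)]
  refine Finset.card_bij' (fun x _ => if x < nGe2 d then x
      else nGe2 d + (x - (nGe2 d + psum d (nGe2 d))) / 2)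
    (fun y _ => if y < nGe2 d then y
      else (nGe2 d + psum d (nGe2 d)) + 2 * (y - nGe2 d)) ?_ ?_ ?_ ?_
  · intro x hx
    simp only [Finset.mem_filter, Finset.mem_range] at hx ⊢
    split_ifs <;> omega
  · intro y hy
    simp only [Finset.mem_filter, Finset.mem_range] at hy ⊢
    split_ifs <;> omega
  · intro x hx
    simp only [Finset.mem_filter, Finset.mem_range] at hx
    split_ifs <;> omega
  · intro y hy
    simp only [Finset.mem_range] at hy
    split_ifs <;> omega

include hA hB hC in
lemma Dset_dom : DomSet (Gd d)
    ↑((univ : Finset (Fin n)).filter fun v : Fin n => (v : ℕ) < nGe2 d ∨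
      (nGe2 d + psum d (nGe2 d) ≤ (v : ℕ) ∧
        ((v : ℕ) - (nGe2 d + psum d (nGe2 d))) % 2 = 0)) := by
  intro v hv
  rw [Finset.mem_coe, Finset.mem_filter] at hv
  push_neg at hv
  have hv' := hv (Finset.mem_univ v)
  have hvk : nGe2 d ≤ (v : ℕ) := by omega
  by_cases hvs : (v : ℕ) < nGe2 d + psum d (nGe2 d)
  · have hctr := ctr_char (d := d) (t := (v : ℕ) - nGe2 d) (by omega)
    have hkn := nGe2_le d
    refine ⟨⟨ctr d ((v : ℕ) - nGe2 d), by omega⟩, ?_, ?_⟩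
    · rw [Finset.mem_coe, Finset.mem_filter]
      exact ⟨Finset.mem_univ _, Or.inl (by dsimp only; omega)⟩
    · exact ((adj_star hA hB hC hvk hvs).mpr rfl).symm
  · obtain ⟨hm1, hm2, hm3, hm4, hm5⟩ := Qf_match (d := d) (by omega) v.isLt hC
    refine ⟨⟨Qf d (v : ℕ), hm2⟩, ?_, ?_⟩
    · rw [Finset.mem_coe, Finset.mem_filter]
      refine ⟨Finset.mem_univ _, Or.inr ⟨by dsimp only; omega, by dsimp only; omega⟩⟩
    · exact ((adj_match hA hB hC (by omega)).mpr rfl).symm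

end Gd2

theorem stmt5 {n : ℕ} (d : Fin n → ℕ) (hd : Antitone d) (hpos : ∀ i, 1 ≤ d i)
    (heven : Even (∑ i, d i)) (hsum : ∑ i, d i ≤ 2 * n - 2)
    (h1 : psum d (nGe2 d) ≤ nCount d 1) :
    gammaFmin d = nGe2 d + (nCount d 1 - psum d (nGe2 d)) / 2 := by
  classical
  have hA : 2 * nGe2 d ≤ psum d (nGe2 d) := two_nGe2_le_psum hd
  have hkn : nGe2 d + nCount d 1 = n := nGe2_add_nCount hd hpos
  have hsum_eq : ∑ i, d i = psum d (nGe2 d) + nCount d 1 := sum_eq_psum_add_nCount hd hpos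
  have hB : nGe2 d + psum d (nGe2 d) ≤ n := by omega
  have heven2 : (∑ i, d i) % 2 = 0 := Nat.even_iff.mp heven
  have hC : (n - (nGe2 d + psum d (nGe2 d))) % 2 = 0 := by omega
  set t0 := nGe2 d + (nCount d 1 - psum d (nGe2 d)) / 2 with ht0
  have hlow : ∀ F : SimpleGraph (Fin n), IsForestReal d F → t0 ≤ domNum F := by
    intro F hF
    have hFsum : ∑ i, deg F i = ∑ i, d i := Finset.sum_congr rfl (fun i _ => hF.2 i)
    apply le_csInf
    · refine ⟨(univ : Finset (Fin n)).card, show ∃ D : Finset (Fin n), D.card = _ ∧ DomSet F ↑D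
        from ⟨univ, rfl, ?_⟩⟩
      intro v hv
      exact absurd (Finset.mem_coe.mpr (Finset.mem_univ v)) hv
    · rintro m ⟨D, rfl, hD⟩
      have := dom_card_lower F D hD
      rw [hFsum, hsum_eq] at this
      omega
  have hreal : IsForestReal d (Gd d) :=
    ⟨gd_acyclic hA hB hC, deg_Gd hA hB hC hd hpos⟩
  have hDcard := Dset_card (d := d) hB hC
  have hDdom := Dset_dom hA hB hC
  have hup : domNum (Gd d) ≤ t0 := by
    exact Nat.sInf_le (show ∃ D : Finset (Fin n), D.card = t0 ∧ DomSet (Gd d) ↑D from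
      ⟨_, by omega, hDdom⟩)
  have hdomeq : domNum (Gd d) = t0 := le_antisymm hup (hlow _ hreal)
  apply le_antisymm
  · exact Nat.sInf_le (show ∃ F : SimpleGraph (Fin n), IsForestReal d F ∧ domNum F = t0 from
      ⟨Gd d, hreal, hdomeq⟩)
  · refine le_csInf ⟨t0, show ∃ F : SimpleGraph (Fin n), IsForestReal d F ∧ domNum F = t0 from
      ⟨Gd d, hreal, hdomeq⟩⟩ ?_
    rintro m ⟨F, hF, rfl⟩
    exact hlow F hF
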